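/- If a structure (M,f) satisfies the translated formula T(φ) for a sentence φ of L_C (with T(Cxψ) = ∃x(Dx ∧ T(ψ))), where D^M is nonempty, then the singleton model set {(M,f)} positively satisfies φ in the model-set semantics of L_C. -/

import Mathlib

/-- A τ-model together with an assignment: carrier `U`, a domain `dom ⊆ U`,
interpretations of the relation symbols, and an assignment of variables. -/
structure Model (U : Type) (Rel : Type) (ar : Rel → ℕ) where
  dom : Set U
  rel : ∀ r : Rel, (Fin (ar r) → U) → Prop
  asg : ℕ → U

/-- First-order formulas over a relational signature (variables are `ℕ`). -/
inductive Fml (Rel : Type) (ar : Rel → ℕ) : Type where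
  | atom (r : Rel) (v : Fin (ar r) → ℕ)
  | eq (x y : ℕ)
  | and (φ ψ : Fml Rel ar)
  | not (φ : Fml Rel ar)
  | ex (x : ℕ) (φ : Fml Rel ar)

variable {U : Type} {Rel : Type} {ar : Rel → ℕ}

def upd (f : ℕ → U) (x : ℕ) (a : U) : ℕ → U :=
  fun n => if n = x then a else f n

/-- Modify the assignment of a model at variable `x`. -/
def setVar (M : Model U Rel ar) (x : ℕ) (a : U) : Model U Rel ar :=
  { M with asg := upd M.asg x a }

/-- Standard Tarskian satisfaction. -/
def Tarski : Model U Rel ar → Fml Rel ar → Prop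
  | M, .atom r v => M.rel r (fun i => M.asg (v i))
  | M, .eq x y => M.asg x = M.asg y
  | M, .and φ ψ => Tarski M φ ∧ Tarski M ψ
  | M, .not φ => ¬ Tarski M φ
  | M, .ex x φ => ∃ a ∈ M.dom, Tarski (setVar M x a) φ

/-- `𝓜[F/x]` for a choice function `F`. -/
def updSet (𝓜 : Set (Model U Rel ar)) (x : ℕ) (F : Model U Rel ar → U) :
    Set (Model U Rel ar) :=
  (fun M => setVar M x (F M)) '' 𝓜

/-- `𝓜[⊤/x]`: extend every assignment by every element of the respective domain. -/
def topSet (𝓜 : Set (Model U Rel ar)) (x : ℕ) : Set (Model U Rel ar) :=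
  { N | ∃ M ∈ 𝓜, ∃ b ∈ M.dom, N = setVar M x b }

/-- Model-set semantics: `Sat true φ 𝓜` is `𝓜 ⊨⁺ φ` and `Sat false φ 𝓜` is `𝓜 ⊨⁻ φ`. -/
def Sat : Bool → Fml Rel ar → Set (Model U Rel ar) → Prop
  | pos, .atom r v, 𝓜 => ∀ M ∈ 𝓜, (M.rel r (fun i => M.asg (v i)) ↔ pos = true)
  | pos, .eq x y, 𝓜 => ∀ M ∈ 𝓜, (M.asg x = M.asg y ↔ pos = true)
  | true, .and φ ψ, 𝓜 => Sat true φ 𝓜 ∧ Sat true ψ 𝓜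
  | false, .and φ ψ, 𝓜 =>
      ∃ 𝓜' 𝓜'', 𝓜' ∪ 𝓜'' = 𝓜 ∧ Sat false φ 𝓜' ∧ Sat false ψ 𝓜''
  | pos, .not φ, 𝓜 => Sat (!pos) φ 𝓜
  | true, .ex x φ, 𝓜 =>
      ∃ F : Model U Rel ar → U, (∀ M ∈ 𝓜, F M ∈ M.dom) ∧ Sat true φ (updSet 𝓜 x F)
  | false, .ex x φ, 𝓜 => Sat false φ (topSet 𝓜 x)

/-- Formulas of `L_C*`: first-order logic extended with the quantifier `Cx`. -/
inductive FmlC (Rel : Type) (ar : Rel → ℕ) : Type where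
  | atom (r : Rel) (v : Fin (ar r) → ℕ)
  | eq (x y : ℕ)
  | and (φ ψ : FmlC Rel ar)
  | not (φ : FmlC Rel ar)
  | ex (x : ℕ) (φ : FmlC Rel ar)
  | C (x : ℕ) (φ : FmlC Rel ar)

/-- The common domain of a model set: the intersection of all domains. -/
def commonDom (𝓜 : Set (Model U Rel ar)) : Set U :=
  { a | ∀ M ∈ 𝓜, a ∈ M.dom }

/-- `𝓜[A/x]`: extend every assignment by every element of `A`. -/
def subSet (𝓜 : Set (Model U Rel ar)) (x : ℕ) (A : Set U) : Set (Model U Rel ar) :=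
  { N | ∃ M ∈ 𝓜, ∃ b ∈ A, N = setVar M x b }

/-- Model-set semantics for `L_C*`: `SatC true φ 𝓜` is `𝓜 ⊨⁺ φ`, `SatC false φ 𝓜`
is `𝓜 ⊨⁻ φ`.  `Cx` is interpreted positively by a constant choice function into the
common domain, and negatively via all extensions by elements of the common domain. -/
def SatC : Bool → FmlC Rel ar → Set (Model U Rel ar) → Prop
  | pos, .atom r v, 𝓜 => ∀ M ∈ 𝓜, (M.rel r (fun i => M.asg (v i)) ↔ pos = true)
  | pos, .eq x y, 𝓜 => ∀ M ∈ 𝓜, (M.asg x = M.asg y ↔ pos = true)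
  | true, .and φ ψ, 𝓜 => SatC true φ 𝓜 ∧ SatC true ψ 𝓜
  | false, .and φ ψ, 𝓜 =>
      ∃ 𝓜' 𝓜'', 𝓜' ∪ 𝓜'' = 𝓜 ∧ SatC false φ 𝓜' ∧ SatC false ψ 𝓜''
  | pos, .not φ, 𝓜 => SatC (!pos) φ 𝓜
  | true, .ex x φ, 𝓜 =>
      ∃ F : Model U Rel ar → U, (∀ M ∈ 𝓜, F M ∈ M.dom) ∧ SatC true φ (updSet 𝓜 x F)
  | false, .ex x φ, 𝓜 => SatC false φ (topSet 𝓜 x)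
  | true, .C x φ, 𝓜 =>
      ∃ a : U, (∀ M ∈ 𝓜, a ∈ M.dom) ∧ SatC true φ (updSet 𝓜 x (fun _ => a))
  | false, .C x φ, 𝓜 => SatC false φ (subSet 𝓜 x (commonDom 𝓜))

/-- No occurrence of `Cx` at all. -/
def CFree : FmlC Rel ar → Prop
  | .atom _ _ => True
  | .eq _ _ => True
  | .and φ ψ => CFree φ ∧ CFree ψ
  | .not φ => CFree φ
  | .ex _ φ => CFree φ
  | .C _ _ => False

/-- Membership in the fragment `L_C`: `Cx` never occurs in the scope of a negation. -/
def LC : FmlC Rel ar → Prop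
  | .atom _ _ => True
  | .eq _ _ => True
  | .and φ ψ => LC φ ∧ LC ψ
  | .not φ => CFree φ
  | .ex _ φ => LC φ
  | .C _ φ => LC φ

/-- Free variables of an `L_C*`-formula. -/
def fv : FmlC Rel ar → Set ℕ
  | .atom _ v => Set.range v
  | .eq x y => {x, y}
  | .and φ ψ => fv φ ∪ fv ψ
  | .not φ => fv φ
  | .ex x φ => fv φ \ {x}
  | .C x φ => fv φ \ {x}

/-- The signature extended by a fresh unary predicate `D` (the symbol `none`). -/
def arD (ar : Rel → ℕ) : Option Rel → ℕ
  | none => 1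
  | some r => ar r

/-- The translation `T` from `L_C` into first-order logic over the extended signature:
identity on first-order constructors, `T(Cxφ) = ∃x(Dx ∧ T(φ))`. -/
def T : FmlC Rel ar → Fml (Option Rel) (arD ar)
  | .atom r v => .atom (some r) v
  | .eq x y => .eq x y
  | .and φ ψ => .and (T φ) (T ψ)
  | .not φ => .not (T φ)
  | .ex x φ => .ex x (T φ)
  | .C x φ => .ex x (.and (.atom none (fun _ => x)) (T φ))

/-- Expand a model by interpreting the fresh predicate `D` as the set `A`. -/
def expand (A : Set U) (M : Model U Rel ar) : Model U (Option Rel) (arD ar) where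
  dom := M.dom
  rel := fun o => match o with
    | none => fun v => v ⟨0, Nat.one_pos⟩ ∈ A
    | some r => M.rel r
  asg := M.asg

/-- `𝓜_D`: expand every structure of `𝓜` by interpreting `D` as the common domain. -/
def expandSet (𝓜 : Set (Model U Rel ar)) : Set (Model U (Option Rel) (arD ar)) :=
  expand (commonDom 𝓜) '' 𝓜

/-- Forget the predicate `D` of a model over the extended signature. -/
def restrict (M : Model U (Option Rel) (arD ar)) : Model U Rel ar where
  dom := M.dom
  rel := fun r => M.rel (some r)
  asg := M.asg

/-- Tarskian satisfaction extended to `L_C*`, reading `C` as `∃`. -/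
def TarC : Model U Rel ar → FmlC Rel ar → Prop
  | M, .atom r v => M.rel r (fun i => M.asg (v i))
  | M, .eq x y => M.asg x = M.asg y
  | M, .and φ ψ => TarC M φ ∧ TarC M ψ
  | M, .not φ => ¬ TarC M φ
  | M, .ex x φ => ∃ a ∈ M.dom, TarC (setVar M x a) φ
  | M, .C x φ => ∃ a ∈ M.dom, TarC (setVar M x a) φ

lemma restrict_setVar (N : Model U (Option Rel) (arD ar)) (x : ℕ) (a : U) :
    restrict (setVar N x a) = setVar (restrict N) x a := rfl

lemma tarT (φ : FmlC Rel ar) (hC : CFree φ) :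
    ∀ N : Model U (Option Rel) (arD ar), Tarski N (T φ) ↔ TarC (restrict N) φ := by
  induction φ with
  | atom r v => intro N; exact Iff.rfl
  | eq x y => intro N; exact Iff.rfl
  | and φ ψ ihφ ihψ =>
    intro N
    exact and_congr (ihφ hC.1 N) (ihψ hC.2 N)
  | not φ ih =>
    intro N
    exact not_congr (ih hC N)
  | ex x φ ih =>
    intro N
    constructor
    · rintro ⟨a, ha, h⟩; exact ⟨a, ha, (ih hC _).mp h⟩
    · rintro ⟨a, ha, h⟩; exact ⟨a, ha, (ih hC _).mpr h⟩
  | C x φ ih => exact absurd hC (by simp [CFree])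

lemma pointwise (φ : FmlC Rel ar) (hC : CFree φ) :
    ∀ (b : Bool) (𝓜 : Set (Model U Rel ar)),
      (∀ M ∈ 𝓜, (TarC M φ ↔ b = true)) → SatC b φ 𝓜 := by
  induction φ with
  | atom r v => intro b 𝓜 h; simpa only [SatC, TarC] using h
  | eq x y => intro b 𝓜 h; simpa only [SatC, TarC] using h
  | and φ ψ ihφ ihψ =>
    intro b 𝓜 h
    cases b with
    | true =>
      refine ⟨ihφ hC.1 true 𝓜 ?_, ihψ hC.2 true 𝓜 ?_⟩ <;>
        · intro M hM
          simp only [iff_true]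
          have := (h M hM).mpr rfl
          first
          | exact this.1
          | exact this.2
    | false =>
      refine ⟨{M ∈ 𝓜 | ¬ TarC M φ}, {M ∈ 𝓜 | ¬ TarC M ψ}, ?_, ?_, ?_⟩
      · ext M
        constructor
        · rintro (⟨hM, _⟩ | ⟨hM, _⟩) <;> exact hM
        · intro hM
          have h' : ¬ (TarC M φ ∧ TarC M ψ) := by
            have := (h M hM)
            simp only [TarC, Bool.false_eq_true, iff_false] at this
            exact this
          rcases not_and_or.mp h' with h' | h'
          · exact Or.inl ⟨hM, h'⟩
          · exact Or.inr ⟨hM, h'⟩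
      · exact ihφ hC.1 false _ (fun M hM => by
          simp only [Bool.false_eq_true, iff_false]; exact hM.2)
      · exact ihψ hC.2 false _ (fun M hM => by
          simp only [Bool.false_eq_true, iff_false]; exact hM.2)
  | not φ ih =>
    intro b 𝓜 h
    simp only [SatC]
    apply ih hC
    intro M hM
    have := h M hM
    cases b <;> simp_all [TarC]
  | ex x φ ih =>
    intro b 𝓜 h
    cases b with
    | true =>
      classical
      refine ⟨fun M => if h' : ∃ a ∈ M.dom, TarC (setVar M x a) φ
          then h'.choose else M.asg 0, ?_, ?_⟩
      · intro M hM
        have hE : ∃ a ∈ M.dom, TarC (setVar M x a) φ := (h M hM).mpr rfl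
        simp only [dif_pos hE]
        exact hE.choose_spec.1
      · apply ih hC true
        rintro N ⟨M, hM, rfl⟩
        have hE : ∃ a ∈ M.dom, TarC (setVar M x a) φ := (h M hM).mpr rfl
        simp only [iff_true, dif_pos hE]
        exact hE.choose_spec.2
    | false =>
      simp only [SatC]
      apply ih hC false
      rintro N ⟨M, hM, b, hb, rfl⟩
      have hne : ¬ ∃ a ∈ M.dom, TarC (setVar M x a) φ := by
        have := h M hM
        simp only [TarC, Bool.false_eq_true, iff_false] at this
        exact this
      simp only [Bool.false_eq_true, iff_false]
      exact fun hc => hne ⟨b, hb, hc⟩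
  | C x φ ih => exact absurd hC (by simp [CFree])

lemma mainLem (φ : FmlC Rel ar) (hLC : LC φ) :
    ∀ N : Model U (Option Rel) (arD ar),
      Tarski N (T φ) → SatC true φ ({restrict N} : Set (Model U Rel ar)) := by
  induction φ with
  | atom r v =>
    intro N h
    rintro M rfl
    exact iff_of_true h rfl
  | eq x y =>
    intro N h
    rintro M rfl
    exact iff_of_true h rfl
  | and φ ψ ihφ ihψ =>
    intro N h
    exact ⟨ihφ hLC.1 N h.1, ihψ hLC.2 N h.2⟩
  | not φ ih =>
    intro N h
    simp only [SatC]
    apply pointwise φ hLC false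
    rintro M rfl
    simp only [Bool.false_eq_true, iff_false]
    exact fun hc => h ((tarT φ hLC N).mpr hc)
  | ex x φ ih =>
    intro N h
    obtain ⟨a, ha, hsat⟩ := h
    refine ⟨fun _ => a, ?_, ?_⟩
    · rintro M rfl; exact ha
    · have : updSet ({restrict N} : Set (Model U Rel ar)) x (fun _ => a)
          = {restrict (setVar N x a)} := by
        simp [updSet, Set.image_singleton, restrict_setVar]
      rw [this]
      exact ih hLC _ hsat
  | C x φ ih =>
    intro N h
    obtain ⟨a, ha, hsat⟩ := h
    refine ⟨a, ?_, ?_⟩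
    · rintro M rfl; exact ha
    · have : updSet ({restrict N} : Set (Model U Rel ar)) x (fun _ => a)
          = {restrict (setVar N x a)} := by
        simp [updSet, Set.image_singleton, restrict_setVar]
      rw [this]
      exact ih hLC _ hsat.2

/-- If a structure with nonempty `D`-interpretation Tarski-satisfies `T(φ)` for a
sentence `φ` of `L_C`, then the singleton model set of its `D`-free restriction
positively satisfies `φ`. -/
theorem translation_sat_to_singleton {U : Type} (φ : FmlC Rel ar)
    (hLC : LC φ) (hsent : fv φ = ∅) (M : Model U (Option Rel) (arD ar))
    (hD : ∃ a : U, M.rel none (fun _ => a))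
    (hsat : Tarski M (T φ)) :
    SatC true φ ({restrict M} : Set (Model U Rel ar)) :=
  mainLem φ hLC M hsat
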